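/- arXiv:2205.04242 — 3 statements merged into one kernel-verified Lean document; each statement's English description precedes it below -/
import Mathlib

section
/- For all real x with -1 ≤ x < 1, the series ∑_{n=1}^∞ (C(2n,n)/(n·4^n))·xⁿ converges and equals 2·log(2/(1+√(1-x))), where C(2n,n) is the central binomial coefficient. -/
open Real Set Filter Topology

section CentralBinomGF

noncomputable def cb (m : ℕ) : ℝ := (Nat.centralBinom m : ℝ) / 4 ^ m

lemma cb_zero : cb 0 = 1 := by simp [cb, Nat.centralBinom]

lemma cb_pos (m : ℕ) : 0 < cb m := by
  apply div_pos (by exact_mod_cast m.centralBinom_pos) (by positivity)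

lemma cb_rec (m : ℕ) : 2 * ((m : ℝ) + 1) * cb (m + 1) = (2 * m + 1) * cb m := by
  have h := Nat.succ_mul_centralBinom_succ m
  have h' : ((m : ℝ) + 1) * (Nat.centralBinom (m + 1) : ℝ)
      = 2 * (2 * m + 1) * (Nat.centralBinom m : ℝ) := by exact_mod_cast h
  have h4 : (4 : ℝ) ^ m ≠ 0 := by positivity
  unfold cb
  rw [pow_succ]
  field_simp
  linear_combination 2 * h'

lemma cb_succ (m : ℕ) : cb (m + 1) = (2 * m + 1) / (2 * ((m : ℝ) + 1)) * cb m := by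
  have h := cb_rec m
  field_simp
  linarith

lemma cb_sqrt_le (m : ℕ) : cb m * Real.sqrt (m + 1) ≤ 1 := by
  induction m with
  | zero => simp [cb_zero]
  | succ m ih =>
    have key : Real.sqrt ((m:ℝ) + 2) * (2 * m + 1) ≤ Real.sqrt ((m:ℝ) + 1) * (2 * m + 2) := by
      rw [show (2 * (m:ℝ) + 1) = Real.sqrt ((2 * m + 1) ^ 2) by rw [Real.sqrt_sq (by positivity)],
        show (2 * (m:ℝ) + 2) = Real.sqrt ((2 * m + 2) ^ 2) by rw [Real.sqrt_sq (by positivity)],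
        ← Real.sqrt_mul (by positivity), ← Real.sqrt_mul (by positivity)]
      apply Real.sqrt_le_sqrt
      nlinarith
    have hcb := (cb_pos m).le
    have hsq : (0:ℝ) ≤ Real.sqrt ((m:ℝ) + 1) := Real.sqrt_nonneg _
    have hnum : (2 * (m:ℝ) + 1) * cb m * Real.sqrt ((m:ℝ) + 2)
        ≤ (2 * (m:ℝ) + 2) * (cb m * Real.sqrt ((m:ℝ) + 1)) := by
      nlinarith [mul_le_mul_of_nonneg_left key hcb]
    rw [cb_succ]
    push_cast
    calc (2 * (m:ℝ) + 1) / (2 * ((m:ℝ) + 1)) * cb m * Real.sqrt ((m:ℝ) + 1 + 1)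
        ≤ (2 * (m:ℝ) + 2) / (2 * ((m:ℝ) + 1)) * (cb m * Real.sqrt ((m:ℝ) + 1)) := by
          rw [show ((m:ℝ) + 1 + 1) = (m:ℝ) + 2 by ring]
          simp only [div_mul_eq_mul_div]
          exact (div_le_div_iff_of_pos_right (show (0:ℝ) < 2 * ((m:ℝ) + 1) by positivity)).mpr hnum
      _ ≤ (2 * (m:ℝ) + 2) / (2 * ((m:ℝ) + 1)) * 1 := by
          apply mul_le_mul_of_nonneg_left ih (by positivity)
      _ ≤ 1 := by rw [mul_one]; rw [div_le_one (by positivity)]; linarith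

lemma cb_le_one (m : ℕ) : cb m ≤ 1 := by
  have h := cb_sqrt_le m
  have h1 : Real.sqrt 1 ≤ Real.sqrt ((m:ℝ) + 1) := Real.sqrt_le_sqrt (by push_cast; linarith [Nat.cast_nonneg (α := ℝ) m])
  rw [Real.sqrt_one] at h1
  nlinarith [cb_pos m]

noncomputable def Sf (x : ℝ) : ℝ := ∑' n : ℕ, cb (n + 1) / (n + 1) * x ^ (n + 1)
noncomputable def Fc (x : ℝ) : ℝ := ∑' m : ℕ, cb m * x ^ m

lemma summable_u : Summable (fun n : ℕ => 1 / (((n:ℝ) + 1) * Real.sqrt ((n:ℝ) + 1))) := by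
  have h : Summable (fun n : ℕ => ((n:ℝ) ^ ((3:ℝ)/2))⁻¹) :=
    (Real.summable_nat_rpow_inv).mpr (by norm_num)
  have h2 := h.comp_injective (add_left_injective 1)
  apply h2.congr
  intro n
  have hp : (0:ℝ) < (n:ℝ) + 1 := by positivity
  simp only [Function.comp]
  push_cast
  rw [show ((3:ℝ)/2) = 1 + 1/2 by norm_num, Real.rpow_add hp, Real.rpow_one,
    ← Real.sqrt_eq_rpow, one_div]

lemma main_bound {x : ℝ} (hx : |x| ≤ 1) (n : ℕ) :
    ‖cb (n + 1) / (n + 1) * x ^ (n + 1)‖ ≤ 1 / (((n:ℝ) + 1) * Real.sqrt ((n:ℝ) + 1)) := by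
  have hp : (0:ℝ) < (n:ℝ) + 1 := by positivity
  have h1 : |x ^ (n+1)| ≤ 1 := by
    rw [abs_pow]; exact pow_le_one₀ (abs_nonneg x) hx
  have h2 : cb (n+1) * Real.sqrt ((n:ℝ) + 2) ≤ 1 := by
    have := cb_sqrt_le (n+1)
    push_cast at this
    rw [show ((n:ℝ)+1+1) = (n:ℝ)+2 by ring] at this
    exact this
  have h3 : Real.sqrt ((n:ℝ) + 1) ≤ Real.sqrt ((n:ℝ) + 2) := Real.sqrt_le_sqrt (by linarith)
  have h4 : cb (n+1) * Real.sqrt ((n:ℝ)+1) ≤ 1 :=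
    le_trans (mul_le_mul_of_nonneg_left h3 (cb_pos _).le) h2
  have h5 : cb (n+1) / ((n:ℝ)+1) ≤ 1 / (((n:ℝ)+1) * Real.sqrt ((n:ℝ)+1)) := by
    rw [div_le_div_iff₀ hp (by positivity)]
    nlinarith [mul_le_mul_of_nonneg_left h4 hp.le]
  have hle : cb (n+1) / ((n:ℝ)+1) * |x ^ (n+1)| ≤ cb (n+1) / ((n:ℝ)+1) :=
    mul_le_of_le_one_right (div_nonneg (cb_pos _).le hp.le) h1
  rw [norm_mul, norm_div]
  simp only [Real.norm_eq_abs]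
  rw [abs_of_pos (cb_pos _), abs_of_pos (show (0:ℝ) < ((n:ℕ)+1 : ℝ) by push_cast; linarith)]
  push_cast
  exact hle.trans h5

lemma summable_main {x : ℝ} (hx : |x| ≤ 1) :
    Summable (fun n : ℕ => cb (n + 1) / (n + 1) * x ^ (n + 1)) :=
  Summable.of_norm_bounded summable_u (main_bound hx)
lemma summable_geom_deriv {r : ℝ} (h0 : 0 ≤ r) (h1 : r < 1) :
    Summable (fun m : ℕ => ((m:ℝ) + 1) * r ^ m) := by
  have hr : ‖r‖ < 1 := by rwa [Real.norm_eq_abs, abs_of_nonneg h0]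
  have h2 : Summable (fun m : ℕ => (m:ℝ) ^ 1 * r ^ m) :=
    summable_pow_mul_geometric_of_norm_lt_one 1 hr
  have h3 : Summable (fun m : ℕ => r ^ m) := summable_geometric_of_lt_one h0 h1
  simpa [add_mul, pow_one] using (h2.add h3).congr (fun m => by ring)

-- derivative of Sf
lemma Sf_hasDerivAt {x : ℝ} (hx : x ∈ Set.Ioo (-1:ℝ) 1) :
    HasDerivAt Sf (∑' m : ℕ, cb (m + 1) * x ^ m) x := by
  obtain ⟨hx1, hx2⟩ := hx
  set r : ℝ := (|x| + 1) / 2 with hr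
  have hax : |x| < 1 := abs_lt.mpr ⟨hx1, hx2⟩
  have hr0 : 0 < r := by positivity
  have hr1 : r < 1 := by simp only [hr]; linarith
  have hxr : |x| < r := by simp only [hr]; linarith
  have hmem : x ∈ Metric.ball (0:ℝ) r := by simpa [Real.dist_eq] using hxr
  have h0mem : (0:ℝ) ∈ Metric.ball (0:ℝ) r := by simpa [Real.dist_eq] using hr0
  rw [show Sf = fun x : ℝ => ∑' n : ℕ, cb (n + 1) / (n + 1) * x ^ (n + 1) from rfl]
  exact hasDerivAt_tsum_of_isPreconnected (u := fun m : ℕ => ((m:ℝ) + 1) * r ^ m)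
    (g' := fun n y => cb (n + 1) * y ^ n) (summable_geom_deriv hr0.le hr1)
    Metric.isOpen_ball (convex_ball (0:ℝ) r).isPreconnected
    (fun n y _ => by
      have h := (hasDerivAt_pow (n+1) y).const_mul (cb (n+1) / ((n:ℝ)+1))
      refine h.congr_deriv ?_
      have hne : ((n:ℝ)+1) ≠ 0 := by positivity
      push_cast
      field_simp)
    (fun n y hy => by
      have hyr : |y| ≤ r := by
        have := mem_ball_iff_norm.mp hy
        simp only [sub_zero, Real.norm_eq_abs] at this
        exact this.le
      have hcb : |cb (n+1)| ≤ 1 := by rw [abs_of_pos (cb_pos _)]; exact cb_le_one _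
      have hyn : |y| ^ n ≤ r ^ n := pow_le_pow_left₀ (abs_nonneg y) hyr n
      have h1n : (1:ℝ) ≤ (n:ℝ) + 1 := by push_cast; linarith [Nat.cast_nonneg (α := ℝ) n]
      rw [Real.norm_eq_abs, abs_mul, abs_pow]
      calc |cb (n+1)| * |y| ^ n ≤ 1 * r ^ n := by
            apply mul_le_mul hcb hyn (by positivity) zero_le_one
        _ ≤ ((n:ℝ) + 1) * r ^ n := by
            apply mul_le_mul_of_nonneg_right (by linarith) (by positivity)
      )
    h0mem
    (summable_zero.congr (fun n => by simp))
    hmem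

lemma summable_geom_deriv' {r : ℝ} (h0 : 0 ≤ r) (h1 : r < 1) :
    Summable (fun m : ℕ => (m:ℝ) * r ^ (m - 1)) := by
  rw [← summable_nat_add_iff 1]
  exact (summable_geom_deriv h0 h1).congr (fun m => by push_cast; simp)

lemma summable_Tc {x : ℝ} (hx : |x| < 1) :
    Summable (fun m : ℕ => cb m * ((m:ℝ) * x ^ (m - 1))) := by
  apply Summable.of_norm_bounded (summable_geom_deriv' (abs_nonneg x) hx)
  intro m
  rw [Real.norm_eq_abs, abs_mul, abs_mul, abs_pow]
  have h1 : |cb m| ≤ 1 := by rw [abs_of_pos (cb_pos _)]; exact cb_le_one _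
  have h2 : |x| ^ (m - 1) ≤ |x| ^ (m-1) := le_refl _
  have hm : |(m:ℝ)| = (m:ℝ) := abs_of_nonneg (Nat.cast_nonneg m)
  calc |cb m| * (|(m:ℝ)| * |x| ^ (m-1)) ≤ 1 * (|(m:ℝ)| * |x| ^ (m-1)) := by
        apply mul_le_mul_of_nonneg_right h1 (by positivity)
    _ = (m:ℝ) * |x| ^ (m-1) := by rw [one_mul, hm]

lemma Fc_hasDerivAt {x : ℝ} (hx : x ∈ Set.Ioo (-1:ℝ) 1) :
    HasDerivAt Fc (∑' m : ℕ, cb m * ((m:ℝ) * x ^ (m - 1))) x := by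
  obtain ⟨hx1, hx2⟩ := hx
  set r : ℝ := (|x| + 1) / 2 with hr
  have hax : |x| < 1 := abs_lt.mpr ⟨hx1, hx2⟩
  have hr0 : 0 < r := by positivity
  have hr1 : r < 1 := by simp only [hr]; linarith
  have hxr : |x| < r := by simp only [hr]; linarith
  have hmem : x ∈ Metric.ball (0:ℝ) r := by simpa [Real.dist_eq] using hxr
  have h0mem : (0:ℝ) ∈ Metric.ball (0:ℝ) r := by simpa [Real.dist_eq] using hr0
  rw [show Fc = fun x : ℝ => ∑' m : ℕ, cb m * x ^ m from rfl]
  exact hasDerivAt_tsum_of_isPreconnected (u := fun m : ℕ => (m:ℝ) * r ^ (m - 1))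
    (g' := fun m y => cb m * ((m:ℝ) * y ^ (m - 1))) (summable_geom_deriv' hr0.le hr1)
    Metric.isOpen_ball (convex_ball (0:ℝ) r).isPreconnected
    (fun m y _ => (hasDerivAt_pow m y).const_mul (cb m))
    (fun m y hy => by
      have hyr : |y| ≤ r := by
        have := mem_ball_iff_norm.mp hy
        simp only [sub_zero, Real.norm_eq_abs] at this
        exact this.le
      have hcb : |cb m| ≤ 1 := by rw [abs_of_pos (cb_pos _)]; exact cb_le_one _
      have hyn : |y| ^ (m-1) ≤ r ^ (m-1) := pow_le_pow_left₀ (abs_nonneg y) hyr _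
      rw [Real.norm_eq_abs, abs_mul, abs_mul, abs_pow,
        abs_of_nonneg (Nat.cast_nonneg (α := ℝ) m)]
      calc |cb m| * ((m:ℝ) * |y| ^ (m-1)) ≤ 1 * ((m:ℝ) * r ^ (m-1)) := by
            apply mul_le_mul hcb ?_ (by positivity) zero_le_one
            apply mul_le_mul_of_nonneg_left hyn (Nat.cast_nonneg m)
        _ = (m:ℝ) * r ^ (m-1) := one_mul _)
    h0mem
    (by
      apply summable_of_ne_finset_zero (s := ({0} : Finset ℕ))
      intro m hm
      simp only [Finset.mem_singleton] at hm
      simp [zero_pow hm])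
    hmem

lemma Fc_hasSum {x : ℝ} (hx : |x| < 1) : HasSum (fun m : ℕ => cb m * x ^ m) (Fc x) := by
  apply Summable.hasSum
  apply Summable.of_norm_bounded (summable_geometric_of_lt_one (abs_nonneg x) hx)
  intro m
  rw [Real.norm_eq_abs, abs_mul, abs_pow]
  have h1 : |cb m| ≤ 1 := by rw [abs_of_pos (cb_pos _)]; exact cb_le_one _
  calc |cb m| * |x| ^ m ≤ 1 * |x| ^ m := by
        apply mul_le_mul_of_nonneg_right h1 (by positivity)
    _ = |x| ^ m := one_mul _

lemma key2 {x : ℝ} (hx : x ∈ Set.Ioo (-1:ℝ) 1) :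
    2 * (1 - x) * (∑' m : ℕ, cb m * ((m:ℝ) * x ^ (m - 1))) = Fc x := by
  have hax : |x| < 1 := abs_lt.mpr ⟨hx.1, hx.2⟩
  set T := ∑' m : ℕ, cb m * ((m:ℝ) * x ^ (m - 1)) with hT
  have hsumT : HasSum (fun m : ℕ => cb m * ((m:ℝ) * x ^ (m - 1))) T :=
    (summable_Tc hax).hasSum
  have hshift : HasSum (fun m : ℕ => cb (m + 1) * (((m + 1 : ℕ) : ℝ) * x ^ (m + 1 - 1))) T := by
    refine (hasSum_nat_add_iff (f := fun m : ℕ => cb m * ((m:ℝ) * x ^ (m - 1))) 1).mpr ?_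
    simpa using hsumT
  have hfe : (fun m : ℕ => cb (m + 1) * (((m + 1 : ℕ) : ℝ) * x ^ (m + 1 - 1)))
      = fun m : ℕ => ((m:ℝ) + 1) * cb (m + 1) * x ^ m := by
    funext m
    simp only [Nat.add_sub_cancel]
    push_cast
    ring
  rw [hfe] at hshift
  have hfe2 : (fun m : ℕ => 2 * (((m:ℝ) + 1) * cb (m + 1) * x ^ m))
      = fun m : ℕ => (2 * (m:ℝ) + 1) * cb m * x ^ m := by
    funext m
    linear_combination x ^ m * cb_rec m
  have h2 : HasSum (fun m : ℕ => (2 * (m:ℝ) + 1) * cb m * x ^ m) (2 * T) := by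
    have := hshift.mul_left 2
    rwa [hfe2] at this
  have hfe3 : (fun m : ℕ => 2 * x * (((m:ℝ) + 1) * cb (m + 1) * x ^ m))
      = fun m : ℕ => 2 * ((m + 1 : ℕ) : ℝ) * cb (m + 1) * x ^ (m + 1) := by
    funext m; push_cast; ring
  have hq : HasSum (fun m : ℕ => 2 * ((m + 1 : ℕ) : ℝ) * cb (m + 1) * x ^ (m + 1)) (2 * x * T) := by
    have := hshift.mul_left (2 * x)
    rwa [hfe3] at this
  have h3 : HasSum (fun m : ℕ => 2 * (m:ℝ) * cb m * x ^ m) (2 * x * T) := by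
    simpa using (hasSum_nat_add_iff (f := fun m : ℕ => 2 * (m:ℝ) * cb m * x ^ m) 1).mp hq
  have h4 := h2.sub h3
  have hfe4 : (fun m : ℕ => (2 * (m:ℝ) + 1) * cb m * x ^ m - 2 * (m:ℝ) * cb m * x ^ m)
      = fun m : ℕ => cb m * x ^ m := by funext m; ring
  rw [hfe4] at h4
  have hu := (Fc_hasSum hax).unique h4
  linear_combination -hu
lemma Fc_zero : Fc 0 = 1 := by
  have h : ∀ m : ℕ, m ≠ 0 → cb m * (0:ℝ) ^ m = 0 := fun m hm => by simp [zero_pow hm]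
  rw [show Fc 0 = ∑' m : ℕ, cb m * (0:ℝ) ^ m from rfl, tsum_eq_single 0 h]
  simp [cb_zero]

lemma sqrt_hasDerivAt {y : ℝ} (h1y : 0 < 1 - y) :
    HasDerivAt (fun z : ℝ => Real.sqrt (1 - z)) (-(1 / (2 * Real.sqrt (1 - y)))) y := by
  have h := (Real.hasDerivAt_sqrt h1y.ne').comp y ((hasDerivAt_id y).const_sub 1)
  exact h.congr_deriv (by ring)

lemma G_deriv_zero {y : ℝ} (hy : y ∈ Set.Ioo (-1:ℝ) 1) :
    HasDerivAt (fun z => Fc z * Real.sqrt (1 - z)) 0 y := by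
  have h1y : 0 < 1 - y := by linarith [hy.2]
  have hs0 : 0 < Real.sqrt (1 - y) := Real.sqrt_pos.mpr h1y
  have hsq : Real.sqrt (1 - y) ^ 2 = 1 - y := Real.sq_sqrt h1y.le
  have hd := (Fc_hasDerivAt hy).mul (sqrt_hasDerivAt h1y)
  have hk := key2 hy
  set T := ∑' m : ℕ, cb m * ((m:ℝ) * y ^ (m - 1)) with hT
  have heq : T * Real.sqrt (1 - y) + Fc y * -(1 / (2 * Real.sqrt (1 - y))) = 0 := by
    field_simp
    linear_combination 2 * T * hsq + hk
  rw [heq] at hd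
  exact hd

lemma Fc_eq {x : ℝ} (hx : x ∈ Set.Ioo (-1:ℝ) 1) : Fc x * Real.sqrt (1 - x) = 1 := by
  have h0 : (0:ℝ) ∈ Set.Ioo (-1:ℝ) 1 := by constructor <;> norm_num
  have hconst : Fc x * Real.sqrt (1 - x) = Fc 0 * Real.sqrt (1 - 0) := by
    apply (convex_Ioo (-1:ℝ) 1).is_const_of_fderivWithin_eq_zero (𝕜 := ℝ)
      (f := fun z => Fc z * Real.sqrt (1 - z)) ?_ ?_ hx h0
    · intro y hy
      exact ((G_deriv_zero hy).differentiableAt).differentiableWithinAt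
    · intro y hy
      rw [fderivWithin_of_isOpen isOpen_Ioo hy]
      have h2 : HasFDerivAt (fun z => Fc z * Real.sqrt (1 - z)) (0 : ℝ →L[ℝ] ℝ) y := by
        have h3 := (G_deriv_zero hy).hasFDerivAt
        rwa [ContinuousLinearMap.toSpanSingleton_zero] at h3
      exact h2.fderiv
  rw [hconst, Fc_zero]
  simp

lemma cb_one : cb 1 = 1 / 2 := by
  have : Nat.centralBinom 1 = 2 := rfl
  simp [cb, this]
  norm_num

lemma T1_eq {x : ℝ} (hx : x ∈ Set.Ioo (-1:ℝ) 1) :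
    (∑' m : ℕ, cb (m + 1) * x ^ m)
      = 1 / (Real.sqrt (1 - x) * (1 + Real.sqrt (1 - x))) := by
  have h1x : 0 < 1 - x := by linarith [hx.2]
  have hax : |x| < 1 := abs_lt.mpr ⟨hx.1, hx.2⟩
  set s := Real.sqrt (1 - x) with hs
  have hs0 : 0 < s := Real.sqrt_pos.mpr h1x
  have hsq : s ^ 2 = 1 - x := Real.sq_sqrt h1x.le
  rcases eq_or_ne x 0 with h0 | h0
  · subst h0
    have h : ∀ m : ℕ, m ≠ 0 → cb (m + 1) * (0:ℝ) ^ m = 0 := fun m hm => by simp [zero_pow hm]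
    rw [tsum_eq_single 0 h]
    have : s = 1 := by rw [hs]; simp
    rw [this, cb_one]
    norm_num
  · have hsum1 : Summable (fun m : ℕ => cb (m + 1) * x ^ m) := by
      apply Summable.of_norm_bounded (summable_geometric_of_lt_one (abs_nonneg x) hax)
      intro m
      rw [Real.norm_eq_abs, abs_mul, abs_pow]
      have h1 : |cb (m+1)| ≤ 1 := by rw [abs_of_pos (cb_pos _)]; exact cb_le_one _
      calc |cb (m+1)| * |x| ^ m ≤ 1 * |x| ^ m :=
            mul_le_mul_of_nonneg_right h1 (by positivity)
        _ = |x| ^ m := one_mul _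
    set U := ∑' m : ℕ, cb (m + 1) * x ^ m with hU
    have hUsum : HasSum (fun m : ℕ => cb (m + 1) * x ^ m) U := hsum1.hasSum
    have hfe : (fun m : ℕ => x * (cb (m + 1) * x ^ m)) = fun m : ℕ => cb (m + 1) * x ^ (m + 1) := by
      funext m; ring
    have hshift : HasSum (fun m : ℕ => cb (m + 1) * x ^ (m + 1)) (x * U) := by
      have := hUsum.mul_left x
      rwa [hfe] at this
    have hfull : HasSum (fun m : ℕ => cb m * x ^ m) (x * U + 1) := by
      have := (hasSum_nat_add_iff (f := fun m : ℕ => cb m * x ^ m) 1).mp hshift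
      simpa [cb_zero] using this
    have huniq : Fc x = x * U + 1 := (Fc_hasSum hax).unique hfull
    have hFc : Fc x * s = 1 := Fc_eq hx
    have h1s : 1 - s ≠ 0 := by
      intro h
      apply h0
      nlinarith
    have hxs : x = (1 - s) * (1 + s) := by nlinarith
    have h1ps : 0 < 1 + s := by linarith
    have key : (1 - s) * (U * (s * (1 + s)) - 1) = 0 := by
      linear_combination (-s) * huniq + hFc - s * U * hxs
    have key2' : U * (s * (1 + s)) - 1 = 0 := by
      rcases mul_eq_zero.mp key with h | h
      · exact absurd h h1s
      · exact h
    rw [eq_div_iff (by positivity)]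
    linarith [key2']
noncomputable def gl (x : ℝ) : ℝ := 2 * Real.log (2 / (1 + Real.sqrt (1 - x)))

lemma one_add_sqrt_pos (x : ℝ) : 0 < 1 + Real.sqrt (1 - x) := by
  have := Real.sqrt_nonneg (1 - x)
  linarith

lemma gl_eq (x : ℝ) : gl x = 2 * Real.log 2 - 2 * Real.log (1 + Real.sqrt (1 - x)) := by
  unfold gl
  rw [Real.log_div (by norm_num) (one_add_sqrt_pos x).ne']
  ring

lemma gl_hasDerivAt {x : ℝ} (hx : x ∈ Set.Ioo (-1:ℝ) 1) :
    HasDerivAt gl (1 / (Real.sqrt (1 - x) * (1 + Real.sqrt (1 - x)))) x := by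
  have h1x : 0 < 1 - x := by linarith [hx.2]
  have hs0 : 0 < Real.sqrt (1 - x) := Real.sqrt_pos.mpr h1x
  have hps := one_add_sqrt_pos x
  rw [show gl = fun z => 2 * Real.log 2 - 2 * Real.log (1 + Real.sqrt (1 - z)) from
    funext gl_eq]
  have h1 : HasDerivAt (fun z : ℝ => 1 + Real.sqrt (1 - z)) (-(1 / (2 * Real.sqrt (1 - x)))) x :=
    (sqrt_hasDerivAt h1x).const_add 1
  have h2 : HasDerivAt (fun z : ℝ => Real.log (1 + Real.sqrt (1 - z)))
      ((1 + Real.sqrt (1 - x))⁻¹ * -(1 / (2 * Real.sqrt (1 - x)))) x :=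
    by have := (Real.hasDerivAt_log hps.ne').comp x h1; exact this
  have h3 := (h2.const_mul 2).const_sub (2 * Real.log 2)
  refine h3.congr_deriv ?_
  field_simp

lemma Sf_zero : Sf 0 = 0 := by
  rw [show Sf 0 = ∑' n : ℕ, cb (n + 1) / (n + 1) * (0:ℝ) ^ (n + 1) from rfl]
  rw [tsum_congr (fun n => by simp : ∀ n : ℕ, cb (n + 1) / (n + 1) * (0:ℝ) ^ (n + 1) = 0)]
  exact tsum_zero

lemma gl_zero : gl 0 = 0 := by
  unfold gl
  norm_num

lemma Sf_eq_gl {x : ℝ} (hx : x ∈ Set.Ioo (-1:ℝ) 1) : Sf x = gl x := by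
  have h0 : (0:ℝ) ∈ Set.Ioo (-1:ℝ) 1 := by constructor <;> norm_num
  have hder : ∀ y ∈ Set.Ioo (-1:ℝ) 1, HasDerivAt (fun z => Sf z - gl z) 0 y := by
    intro y hy
    have := (Sf_hasDerivAt hy).sub (gl_hasDerivAt hy)
    rwa [T1_eq hy, sub_self] at this
  have hconst : Sf x - gl x = Sf 0 - gl 0 := by
    apply (convex_Ioo (-1:ℝ) 1).is_const_of_fderivWithin_eq_zero (𝕜 := ℝ)
      (f := fun z => Sf z - gl z) ?_ ?_ hx h0
    · intro y hy
      exact ((hder y hy).differentiableAt).differentiableWithinAt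
    · intro y hy
      rw [fderivWithin_of_isOpen isOpen_Ioo hy]
      have h2 : HasFDerivAt (fun z => Sf z - gl z) (0 : ℝ →L[ℝ] ℝ) y := by
        have h3 := (hder y hy).hasFDerivAt
        rwa [ContinuousLinearMap.toSpanSingleton_zero] at h3
      exact h2.fderiv
  rw [Sf_zero, gl_zero] at hconst
  linarith

lemma Sf_eq_gl' {x : ℝ} (hx1 : -1 ≤ x) (hx2 : x < 1) : Sf x = gl x := by
  rcases eq_or_lt_of_le hx1 with h | h
  · subst h
    have hmem : (-1:ℝ) ∈ closure (Set.Ioo (-1:ℝ) 1) := by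
      rw [closure_Ioo (by norm_num : (-1:ℝ) ≠ 1)]
      exact ⟨le_refl _, by norm_num⟩
    have hne : (𝓝[Set.Ioo (-1:ℝ) 1] (-1:ℝ)).NeBot :=
      mem_closure_iff_nhdsWithin_neBot.mp hmem
    have hcontS : ContinuousOn Sf (Set.Icc (-1:ℝ) 1) := by
      rw [show Sf = fun x : ℝ => ∑' n : ℕ, cb (n + 1) / (n + 1) * x ^ (n + 1) from rfl]
      apply continuousOn_tsum (fun n => (Continuous.continuousOn (by continuity))) summable_u
      intro n y hy
      exact main_bound (abs_le.mpr ⟨hy.1, hy.2⟩) n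
    have hS : Tendsto Sf (𝓝[Set.Ioo (-1:ℝ) 1] (-1:ℝ)) (𝓝 (Sf (-1))) := by
      have := (hcontS (-1) (by constructor <;> norm_num)).mono Set.Ioo_subset_Icc_self
      exact this.tendsto
    have hcontg : ContinuousAt gl (-1:ℝ) := by
      have hinner : Continuous (fun z : ℝ => 2 / (1 + Real.sqrt (1 - z))) := by
        apply Continuous.div continuous_const
        · continuity
        · intro z
          exact (one_add_sqrt_pos z).ne'
      have harg : (2 : ℝ) / (1 + Real.sqrt (1 - (-1:ℝ))) ≠ 0 := by
        positivity
      have hlog : ContinuousAt (fun z : ℝ => Real.log (2 / (1 + Real.sqrt (1 - z)))) (-1:ℝ) := by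
        have h := ContinuousAt.comp (g := Real.log)
          (f := fun z : ℝ => 2 / (1 + Real.sqrt (1 - z)))
          (Real.continuousAt_log harg) hinner.continuousAt
        exact h
      exact continuousAt_const.mul hlog
    have hg : Tendsto gl (𝓝[Set.Ioo (-1:ℝ) 1] (-1:ℝ)) (𝓝 (gl (-1))) :=
      hcontg.continuousWithinAt.tendsto
    have hgS : Tendsto Sf (𝓝[Set.Ioo (-1:ℝ) 1] (-1:ℝ)) (𝓝 (gl (-1))) := by
      apply hg.congr'
      filter_upwards [eventually_mem_nhdsWithin] with z hz
      exact (Sf_eq_gl hz).symm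
    exact tendsto_nhds_unique hS hgS
  · exact Sf_eq_gl ⟨h, hx2⟩

theorem central_binom_gf (x : ℝ) (hx : -1 ≤ x) (hx' : x < 1) :
    HasSum (fun n : ℕ =>
      ((Nat.choose (2 * (n + 1)) (n + 1) : ℝ) / ((n + 1) * 4 ^ (n + 1))) * x ^ (n + 1))
      (2 * Real.log (2 / (1 + Real.sqrt (1 - x)))) := by
  have hax : |x| ≤ 1 := abs_le.mpr ⟨hx, hx'.le⟩
  have hfe : (fun n : ℕ =>
      ((Nat.choose (2 * (n + 1)) (n + 1) : ℝ) / ((n + 1) * 4 ^ (n + 1))) * x ^ (n + 1))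
      = fun n : ℕ => cb (n + 1) / (n + 1) * x ^ (n + 1) := by
    funext n
    rw [show cb (n + 1) = (Nat.choose (2 * (n + 1)) (n + 1) : ℝ) / 4 ^ (n + 1) from rfl]
    rw [div_div]
    ring_nf
  rw [hfe]
  have hsum := (summable_main hax).hasSum
  have : (∑' n : ℕ, cb (n + 1) / (n + 1) * x ^ (n + 1)) = Sf x := rfl
  rw [this] at hsum
  rwa [Sf_eq_gl' hx hx'] at hsum
end CentralBinomGF
end

section
/- The series ∑_{n=1}^∞ C(2n,n)/(n·4^n) converges to 2·log 2. -/
open Filter Topology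


noncomputable def bb (n : ℕ) : ℝ := (Nat.centralBinom n : ℝ) / 4 ^ n

lemma bb_pos (n : ℕ) : 0 < bb n := by
  unfold bb
  have := Nat.centralBinom_pos n
  positivity

lemma nat_bound (n : ℕ) : (2*n+1) * Nat.centralBinom n ^ 2 ≤ 16 ^ n := by
  induction n with
  | zero => simp [Nat.centralBinom]
  | succ n ih =>
    have h := Nat.succ_mul_centralBinom_succ n
    have h2 : (n+1)^2 * ((2*(n+1)+1) * Nat.centralBinom (n+1) ^ 2)
        ≤ (n+1)^2 * (16 ^ (n+1)) := by
      have e1 : (n+1)^2 * ((2*(n+1)+1) * Nat.centralBinom (n+1) ^ 2)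
          = (2*n+3) * ((n+1) * Nat.centralBinom (n+1))^2 := by ring
      rw [e1, h]
      have key : (2*n+3) * (2 * (2 * n + 1) * Nat.centralBinom n) ^ 2
          = (4*(2*n+1)*(2*n+3)) * ((2*n+1) * Nat.centralBinom n ^ 2) := by ring
      rw [key]
      calc (4*(2*n+1)*(2*n+3)) * ((2*n+1) * Nat.centralBinom n ^ 2)
          ≤ (4*(2*n+2)*(2*n+2)) * (16 ^ n) := Nat.mul_le_mul (by nlinarith) ih
        _ = (n+1)^2 * 16^(n+1) := by ring
    exact Nat.le_of_mul_le_mul_left h2 (by positivity)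

lemma centralBinom_le_four_pow (n : ℕ) : Nat.centralBinom n ≤ 4 ^ n := by
  have h : Nat.centralBinom n ^ 2 ≤ (4^n)^2 := by
    calc Nat.centralBinom n ^ 2 ≤ (2*n+1) * Nat.centralBinom n ^ 2 :=
          Nat.le_mul_of_pos_left _ (by omega)
      _ ≤ 16 ^ n := nat_bound n
      _ = (4^n)^2 := by rw [← pow_mul, show 16 = 4^2 from rfl, ← pow_mul]; ring_nf
  exact (Nat.pow_le_pow_iff_left (by norm_num)).mp h

lemma bb_le_one (n : ℕ) : bb n ≤ 1 := by
  unfold bb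
  rw [div_le_one (by positivity)]
  exact_mod_cast centralBinom_le_four_pow n

lemma bb_rec (n : ℕ) : (n+1 : ℝ) * bb (n+1) = (2*n+1)/2 * bb n := by
  have h := Nat.succ_mul_centralBinom_succ n
  have h' : (((n+1) * Nat.centralBinom (n+1) : ℕ) : ℝ)
      = ((2 * (2*n+1) * Nat.centralBinom n : ℕ) : ℝ) := by exact_mod_cast h
  push_cast at h'
  unfold bb
  rw [pow_succ]
  field_simp
  linear_combination 2 * h'

lemma bb_sq_le (n : ℕ) : bb n ^ 2 ≤ 1 / (2*n+1) := by
  unfold bb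
  rw [div_pow, div_le_div_iff₀ (by positivity) (by positivity)]
  have h : ((2*n+1) * Nat.centralBinom n ^ 2 : ℕ) ≤ ((16:ℕ) ^ n) := nat_bound n
  have h2 : (((2*n+1) * Nat.centralBinom n ^ 2 : ℕ) : ℝ) ≤ ((16:ℕ)^n : ℝ) := by exact_mod_cast h
  push_cast at h2
  calc (Nat.centralBinom n : ℝ)^2 * (2*↑n+1) = (2*↑n+1) * (Nat.centralBinom n:ℝ)^2 := by ring
    _ ≤ 16^n := h2
    _ = 1 * (4^n)^2 := by rw [← pow_mul, show ((16:ℝ)) = 4^2 by norm_num, ← pow_mul]; ring_nf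


lemma summable_nr {r : ℝ} (hr : |r| < 1) : Summable (fun n : ℕ => (n:ℝ) * r ^ (n-1)) := by
  rw [← summable_nat_add_iff 1]
  simp only [Nat.add_sub_cancel]
  apply Summable.congr (f := fun n : ℕ => (n:ℝ)^1 * r^n + r^n)
  · exact (summable_pow_mul_geometric_of_norm_lt_one 1 (by rwa [Real.norm_eq_abs])).add
      (summable_geometric_of_norm_lt_one (by rwa [Real.norm_eq_abs]))
  · intro n; push_cast; ring

lemma summable_bb_pow {x : ℝ} (hx : |x| < 1) : Summable (fun n => bb n * x ^ n) := by
  apply Summable.of_norm_bounded (summable_geometric_of_norm_lt_one (by rwa [Real.norm_eq_abs] : ‖x‖ < 1)).norm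
  intro n
  simp only [norm_norm, Real.norm_eq_abs, abs_mul, abs_pow, norm_pow]
  calc |bb n| * |x| ^ n ≤ 1 * |x| ^ n := by
        apply mul_le_mul_of_nonneg_right _ (by positivity)
        rw [abs_of_pos (bb_pos n)]; exact bb_le_one n
    _ = |x| ^ n := one_mul _

lemma summable_bb_deriv {x : ℝ} (hx : |x| < 1) :
    Summable (fun n => bb n * ((n:ℝ) * x ^ (n-1))) := by
  apply Summable.of_norm_bounded ((summable_nr hx).abs)
  intro n
  simp only [Real.norm_eq_abs, abs_mul, abs_pow, abs_abs]
  have h1 : |bb n| ≤ 1 := by rw [abs_of_pos (bb_pos n)]; exact bb_le_one n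
  exact mul_le_of_le_one_left (by positivity) h1

noncomputable def hh (x : ℝ) : ℝ := ∑' n, bb n * x ^ n

lemma hasDerivAt_hh {x : ℝ} (hx : |x| < 1) :
    HasDerivAt hh (∑' n, bb n * ((n:ℝ) * x ^ (n-1))) x := by
  unfold hh
  set r : ℝ := (|x| + 1) / 2 with hrdef
  have hxr : |x| < r := by rw [hrdef]; linarith
  have hr0 : 0 ≤ r := by positivity
  have hr1 : r < 1 := by rw [hrdef]; linarith
  have hrabs : |r| < 1 := by rwa [abs_of_nonneg hr0]
  apply hasDerivAt_tsum_of_isPreconnected (g := fun n y => bb n * y ^ n)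
      (g' := fun n y => bb n * ((n:ℝ) * y ^ (n-1))) (u := fun n : ℕ => (n:ℝ) * r ^ (n-1)) (y₀ := 0)
      (summable_nr hrabs) (isOpen_Ioo (a := -r) (b := r))
      (convex_Ioo _ _).isPreconnected
  · intro n y _
    exact (hasDerivAt_pow n y).const_mul (bb n)
  · intro n y hy
    have hy' : |y| ≤ r := le_of_lt (abs_lt.2 ⟨hy.1, hy.2⟩)
    simp only [Real.norm_eq_abs, abs_mul, abs_pow]
    have h1 : |bb n| ≤ 1 := by rw [abs_of_pos (bb_pos n)]; exact bb_le_one n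
    calc |bb n| * (|(n:ℝ)| * |y| ^ (n-1)) ≤ 1 * ((n:ℝ) * r ^ (n-1)) := by
          apply mul_le_mul h1 _ (by positivity) zero_le_one
          rw [Nat.abs_cast]
          exact mul_le_mul_of_nonneg_left (pow_le_pow_left₀ (abs_nonneg y) hy' _) (by positivity)
      _ = (n:ℝ) * r ^ (n-1) := one_mul _
  · exact Set.mem_Ioo.2 ⟨by linarith [abs_nonneg x], by linarith [abs_nonneg x]⟩
  · exact summable_bb_pow (by norm_num : |(0:ℝ)| < 1)
  · exact Set.mem_Ioo.2 ⟨neg_lt_of_abs_lt hxr, lt_of_abs_lt hxr⟩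


lemma summable_shift {x : ℝ} (hx : |x| < 1) :
    Summable (fun n : ℕ => ((n:ℝ)+1) * bb (n+1) * x ^ n) := by
  apply (((summable_nat_add_iff 1).2 (summable_bb_deriv hx))).congr
  intro n
  simp only [Nat.add_sub_cancel]
  push_cast
  ring

lemma summable_nbb {x : ℝ} (hx : |x| < 1) :
    Summable (fun n : ℕ => (n:ℝ) * bb n * x ^ n) := by
  apply ((summable_bb_deriv hx).mul_right x).congr
  intro n
  cases n with
  | zero => simp
  | succ m => simp only [Nat.add_sub_cancel]; push_cast; ring

lemma key_ode {x : ℝ} (hx : |x| < 1) :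
    (1 - x) * (∑' n, bb n * ((n:ℝ) * x ^ (n-1))) = hh x / 2 := by
  have hB : (∑' n, bb n * ((n:ℝ) * x ^ (n-1))) = ∑' n : ℕ, ((n:ℝ)+1) * bb (n+1) * x ^ n := by
    rw [Summable.tsum_eq_zero_add (summable_bb_deriv hx)]
    simp only [Nat.cast_zero, zero_mul, mul_zero, zero_add, Nat.add_sub_cancel]
    apply tsum_congr
    intro n
    push_cast
    ring
  have hA : x * (∑' n, bb n * ((n:ℝ) * x ^ (n-1))) = ∑' n : ℕ, (n:ℝ) * bb n * x ^ n := by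
    rw [← tsum_mul_left]
    apply tsum_congr
    intro n
    cases n with
    | zero => simp
    | succ m => simp only [Nat.add_sub_cancel]; push_cast; ring
  have e : (1 - x) * (∑' n, bb n * ((n:ℝ) * x ^ (n-1)))
      = (∑' n : ℕ, ((n:ℝ)+1) * bb (n+1) * x ^ n) - ∑' n : ℕ, (n:ℝ) * bb n * x ^ n := by
    rw [← hA, ← hB]; ring
  rw [e, ← Summable.tsum_sub (summable_shift hx) (summable_nbb hx)]
  have : ∀ n : ℕ, ((n:ℝ)+1) * bb (n+1) * x ^ n - (n:ℝ) * bb n * x ^ n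
      = (bb n * x ^ n) * (1/2) := by
    intro n
    linear_combination x ^ n * bb_rec n
  calc (∑' n : ℕ, (((n:ℝ)+1) * bb (n+1) * x ^ n - (n:ℝ) * bb n * x ^ n))
      = ∑' n, (bb n * x ^ n) * (1/2) := tsum_congr this
    _ = (∑' n, bb n * x ^ n) * (1/2) := tsum_mul_right
    _ = hh x / 2 := by rw [hh]; ring

lemma hh_zero : hh 0 = 1 := by
  rw [hh, tsum_eq_single 0 (by intro n hn; simp [zero_pow hn])]
  simp [bb, Nat.centralBinom]

lemma hh_sqrt {x : ℝ} (hx0 : 0 ≤ x) (hx1 : x < 1) : hh x * Real.sqrt (1 - x) = 1 := by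
  set φ : ℝ → ℝ := fun y => hh y * Real.sqrt (1 - y) with hφ
  have habs : ∀ y ∈ Set.Icc (0:ℝ) x, |y| < 1 := by
    intro y hy
    rw [abs_lt]
    constructor <;> [linarith [hy.1]; linarith [hy.2]]
  have hderiv : ∀ y ∈ Set.Icc (0:ℝ) x, HasDerivAt φ 0 y := by
    intro y hy
    have hy1 : y < 1 := lt_of_le_of_lt hy.2 hx1
    have hs : (0:ℝ) < 1 - y := by linarith
    have hsq : Real.sqrt (1 - y) > 0 := Real.sqrt_pos.2 hs
    have hder1 := hasDerivAt_hh (habs y hy)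
    have hder2 : HasDerivAt (fun y : ℝ => Real.sqrt (1 - y))
        ((-1) / (2 * Real.sqrt (1 - y))) y := by
      exact HasDerivAt.sqrt ((hasDerivAt_id y).const_sub 1) (ne_of_gt hs)
    have hmul := hder1.mul hder2
    refine hmul.congr_deriv ?_
    have hode := key_ode (habs y hy)
    have hsqsq : Real.sqrt (1 - y) ^ 2 = 1 - y := Real.sq_sqrt (le_of_lt hs)
    set D := ∑' n, bb n * ((n:ℝ) * y ^ (n-1)) with hD
    have hDs : D * Real.sqrt (1 - y) = hh y / (2 * Real.sqrt (1 - y)) := by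
      rw [eq_div_iff (by positivity)]
      linear_combination 2 * hode + 2 * D * hsqsq
    rw [hDs]
    field_simp
    ring
  have hcont : ContinuousOn φ (Set.Icc 0 x) := fun y hy => ((hderiv y hy).continuousAt).continuousWithinAt
  have := constant_of_has_deriv_right_zero hcont
    (fun y hy => ((hderiv y (Set.mem_Icc.2 ⟨hy.1, le_of_lt hy.2⟩)).hasDerivWithinAt))
    x (Set.mem_Icc.2 ⟨hx0, le_refl x⟩)
  rw [hφ] at this
  simp only at this
  rw [this]
  simp [hh_zero]


noncomputable def aa (n : ℕ) : ℝ := bb (n+1) / (n+1)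

noncomputable def ψ (x : ℝ) : ℝ := ∑' n, aa n * x ^ (n+1)

lemma aa_pos (n : ℕ) : 0 < aa n := div_pos (bb_pos _) (by positivity)

lemma summable_S {x : ℝ} (hx : |x| < 1) : Summable (fun n : ℕ => bb (n+1) * x ^ n) := by
  apply Summable.of_norm_bounded (summable_geometric_of_norm_lt_one
    (by rwa [Real.norm_eq_abs] : ‖x‖ < 1)).norm
  intro n
  simp only [Real.norm_eq_abs, norm_norm, abs_mul, abs_pow]
  exact mul_le_of_le_one_left (by positivity) (by
    rw [abs_of_pos (bb_pos _)]; exact bb_le_one _)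

lemma hasDerivAt_psi {x : ℝ} (hx : |x| < 1) :
    HasDerivAt ψ (∑' n : ℕ, bb (n+1) * x ^ n) x := by
  unfold ψ
  set r : ℝ := (|x| + 1) / 2 with hrdef
  have hxr : |x| < r := by rw [hrdef]; linarith
  have hr0 : 0 ≤ r := by positivity
  have hr1 : r < 1 := by rw [hrdef]; linarith
  apply hasDerivAt_tsum_of_isPreconnected (g := fun n y => aa n * y ^ (n+1))
      (g' := fun n y => bb (n+1) * y ^ n) (u := fun n : ℕ => r ^ n) (y₀ := 0)
      (summable_geometric_of_norm_lt_one (by rwa [Real.norm_eq_abs, abs_of_nonneg hr0]))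
      (isOpen_Ioo (a := -r) (b := r)) (convex_Ioo _ _).isPreconnected
  · intro n y _
    have h := (hasDerivAt_pow (n+1) y).const_mul (aa n)
    refine h.congr_deriv ?_
    unfold aa
    have : ((n:ℝ)+1) ≠ 0 := by positivity
    field_simp
    push_cast
    ring
  · intro n y hy
    have hy' : |y| ≤ r := le_of_lt (abs_lt.2 ⟨hy.1, hy.2⟩)
    simp only [Real.norm_eq_abs, abs_mul, abs_pow]
    calc |bb (n+1)| * |y| ^ n ≤ 1 * r ^ n := by
          apply mul_le_mul _ (pow_le_pow_left₀ (abs_nonneg y) hy' n) (by positivity) zero_le_one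
          rw [abs_of_pos (bb_pos _)]; exact bb_le_one _
      _ = r ^ n := one_mul _
  · exact Set.mem_Ioo.2 ⟨by linarith [abs_nonneg x], by linarith [abs_nonneg x]⟩
  · apply Summable.congr (f := fun _ : ℕ => (0:ℝ)) summable_zero
    intro n
    simp
  · exact Set.mem_Ioo.2 ⟨neg_lt_of_abs_lt hxr, lt_of_abs_lt hxr⟩

lemma S_eq {x : ℝ} (hx0 : 0 ≤ x) (hx1 : x < 1) :
    (∑' n : ℕ, bb (n+1) * x ^ n) * (Real.sqrt (1-x) * (1 + Real.sqrt (1-x))) = 1 := by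
  set s := Real.sqrt (1-x) with hs
  have hspos : 0 < s := Real.sqrt_pos.2 (by linarith)
  have hsqsq : s ^ 2 = 1 - x := Real.sq_sqrt (by linarith)
  have hhs : hh x * s = 1 := hh_sqrt hx0 hx1
  have habs : |x| < 1 := by rw [abs_of_nonneg hx0]; exact hx1
  have hSx : x * (∑' n : ℕ, bb (n+1) * x ^ n) = hh x - 1 := by
    have h0 : hh x = bb 0 * x ^ 0 + ∑' n : ℕ, bb (n+1) * x ^ (n+1) :=
      Summable.tsum_eq_zero_add (summable_bb_pow habs)
    have h1 : x * (∑' n : ℕ, bb (n+1) * x ^ n) = ∑' n : ℕ, bb (n+1) * x ^ (n+1) := by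
      rw [← tsum_mul_left]
      exact tsum_congr fun n => by ring
    rw [h1]
    have hbb0 : bb 0 = 1 := by simp [bb, Nat.centralBinom]
    rw [h0, hbb0]
    simp
  rcases eq_or_lt_of_le hx0 with hx0' | hx0'
  · -- x = 0
    have hx0'' : x = 0 := hx0'.symm
    subst hx0''
    have hS0 : (∑' n : ℕ, bb (n+1) * (0:ℝ) ^ n) = bb 1 := by
      rw [tsum_eq_single 0 (by intro n hn; simp [zero_pow hn])]
      simp
    rw [hS0]
    have : bb 1 = 1/2 := by
      simp [bb, Nat.centralBinom]
      norm_num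
    rw [this, hs]
    simp [Real.sqrt_one]
    norm_num
  · -- 0 < x
    have hxne : x ≠ 0 := ne_of_gt hx0'
    apply mul_left_cancel₀ hxne
    linear_combination (s + s^2) * hSx + (1 + s) * hhs - hsqsq

lemma psi_zero : ψ 0 = 0 := by
  unfold ψ
  simp

lemma psi_eq {x : ℝ} (hx0 : 0 ≤ x) (hx1 : x < 1) :
    ψ x = 2 * Real.log 2 - 2 * Real.log (1 + Real.sqrt (1 - x)) := by
  set ρ : ℝ → ℝ := fun y => ψ y - (2 * Real.log 2 - 2 * Real.log (1 + Real.sqrt (1 - y))) with hρ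
  have hderiv : ∀ y ∈ Set.Icc (0:ℝ) x, HasDerivAt ρ 0 y := by
    intro y hy
    have hy1 : y < 1 := lt_of_le_of_lt hy.2 hx1
    have hy0 : 0 ≤ y := hy.1
    have habs : |y| < 1 := by rw [abs_of_nonneg hy0]; exact hy1
    have hspos : 0 < Real.sqrt (1-y) := Real.sqrt_pos.2 (by linarith)
    set s := Real.sqrt (1-y) with hs
    have h1 := hasDerivAt_psi habs
    have hsder : HasDerivAt (fun y : ℝ => 1 + Real.sqrt (1 - y)) ((-1) / (2 * s)) y := by
      have := HasDerivAt.sqrt ((hasDerivAt_id y).const_sub 1) (ne_of_gt (by linarith : (0:ℝ) < 1 - y))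
      exact this.const_add 1
    have hlogder : HasDerivAt (fun y : ℝ => 2 * Real.log (1 + Real.sqrt (1 - y)))
        (2 * (((-1) / (2 * s)) / (1 + s))) y := by
      exact (hsder.log (by positivity)).const_mul 2
    have h2 : HasDerivAt (fun y : ℝ => 2 * Real.log 2 - 2 * Real.log (1 + Real.sqrt (1 - y)))
        (0 - 2 * (((-1) / (2 * s)) / (1 + s))) y := (hasDerivAt_const y _).sub hlogder
    have h3 := h1.sub h2
    refine h3.congr_deriv ?_
    have hSeq := S_eq hy0 hy1
    rw [← hs] at hSeq
    have hne : s * (1 + s) ≠ 0 := by positivity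
    have hSval : (∑' n : ℕ, bb (n+1) * y ^ n) = 1 / (s * (1 + s)) := by
      rw [eq_div_iff hne]; exact hSeq
    rw [hSval]
    field_simp
    ring
  have hcont : ContinuousOn ρ (Set.Icc 0 x) := fun y hy => ((hderiv y hy).continuousAt).continuousWithinAt
  have hconst := constant_of_has_deriv_right_zero hcont
    (fun y hy => ((hderiv y (Set.mem_Icc.2 ⟨hy.1, le_of_lt hy.2⟩)).hasDerivWithinAt))
    x (Set.mem_Icc.2 ⟨hx0, le_refl x⟩)
  have hρ0 : ρ 0 = 0 := by
    rw [hρ]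
    norm_num [psi_zero, Real.sqrt_one]
  have h : ρ x = 0 := hconst.trans hρ0
  rw [hρ] at h
  simp only at h
  linarith


lemma bb_le_inv_sqrt (n : ℕ) : bb n ≤ 1 / Real.sqrt (n+1) := by
  have h1 : bb n ^ 2 ≤ 1 / (n+1) := by
    refine (bb_sq_le n).trans ?_
    apply div_le_div_of_nonneg_left zero_le_one (by positivity)
    push_cast; linarith
  have h2 : bb n ≤ Real.sqrt (1 / (n+1)) := Real.le_sqrt_of_sq_le h1
  calc bb n ≤ Real.sqrt (1 / (n+1)) := h2
    _ = 1 / Real.sqrt (n+1) := by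
        rw [one_div, one_div, Real.sqrt_inv]


lemma summable_aa : Summable aa := by
  have hs : Summable (fun n : ℕ => 1 / ((n:ℝ)+1) ^ ((3:ℝ)/2)) := by
    have := (Real.summable_one_div_nat_rpow (p := 3/2)).2 (by norm_num)
    have h2 := (summable_nat_add_iff 1).2 this
    apply h2.congr
    intro n
    push_cast
    norm_num
  apply Summable.of_nonneg_of_le (fun n => (aa_pos n).le) _ hs
  intro n
  unfold aa
  have hsq : Real.sqrt ((n:ℝ)+2) > 0 := Real.sqrt_pos.2 (by positivity)
  have h1 : bb (n+1) ≤ 1 / Real.sqrt ((n:ℝ)+2) := by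
    have := bb_le_inv_sqrt (n+1)
    push_cast at this
    convert this using 3
    ring
  have h2 : ((n:ℝ)+1) ^ ((3:ℝ)/2) ≤ ((n:ℝ)+1) * Real.sqrt ((n:ℝ)+2) := by
    have e : ((n:ℝ)+1) ^ ((3:ℝ)/2) = ((n:ℝ)+1) * Real.sqrt ((n:ℝ)+1) := by
      rw [Real.sqrt_eq_rpow, show (3:ℝ)/2 = 1 + 1/2 by norm_num,
        Real.rpow_add (by positivity), Real.rpow_one]
    rw [e]
    apply mul_le_mul_of_nonneg_left (Real.sqrt_le_sqrt (by linarith)) (by positivity)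
  calc bb (n+1) / ((n:ℝ)+1) ≤ (1 / Real.sqrt ((n:ℝ)+2)) / ((n:ℝ)+1) := by
        exact (div_le_div_iff_of_pos_right (by positivity)).2 h1
    _ = 1 / (((n:ℝ)+1) * Real.sqrt ((n:ℝ)+2)) := by rw [div_div]; ring_nf
    _ ≤ 1 / ((n:ℝ)+1) ^ ((3:ℝ)/2) := by
        apply div_le_div_of_nonneg_left zero_le_one (by positivity) h2


lemma tsum_aa : (∑' n, aa n) = 2 * Real.log 2 := by
  set L := ∑' n, aa n with hL
  have habel : Tendsto (fun x => ∑' n, aa n * x ^ n) (𝓝[<] (1:ℝ)) (𝓝 L) :=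
    Real.tendsto_tsum_powerSeries_nhdsWithin_lt summable_aa.hasSum.tendsto_sum_nat
  set F : ℝ → ℝ := fun x => (2 * Real.log 2 - 2 * Real.log (1 + Real.sqrt (1 - x))) / x with hF
  have hev : (fun x => ∑' n, aa n * x ^ n) =ᶠ[𝓝[<] (1:ℝ)] F := by
    filter_upwards [Ioo_mem_nhdsLT_of_mem (show (1:ℝ) ∈ Set.Ioc 0 1 by norm_num)]
      with x hx
    have hx0 : 0 < x := hx.1
    have hψ : x * (∑' n, aa n * x ^ n) = ψ x := by
      rw [ψ, ← tsum_mul_left]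
      exact tsum_congr fun n => by ring
    rw [hF]
    simp only
    rw [← psi_eq hx0.le hx.2, ← hψ]
    field_simp
  have hcontF : ContinuousAt F 1 := by
    apply ContinuousAt.div
    · apply ContinuousAt.sub continuousAt_const
      apply ContinuousAt.mul continuousAt_const
      apply ContinuousAt.log
      · exact (continuous_const.add ((continuous_const.sub continuous_id).sqrt)).continuousAt
      · norm_num
    · exact continuousAt_id
    · norm_num
  have hFtendsto : Tendsto F (𝓝[<] (1:ℝ)) (𝓝 (2 * Real.log 2)) := by
    have h1 : F 1 = 2 * Real.log 2 := by
      rw [hF]; norm_num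
    have := hcontF.tendsto.mono_left (nhdsWithin_le_nhds (s := Set.Iio (1:ℝ)))
    rwa [h1] at this
  exact tendsto_nhds_unique (habel.congr' hev) hFtendsto

theorem central_binom_sum :
    HasSum (fun n : ℕ =>
      (Nat.choose (2 * (n + 1)) (n + 1) : ℝ) / ((n + 1) * 4 ^ (n + 1)))
      (2 * Real.log 2) := by
  have heq : (fun n : ℕ =>
      (Nat.choose (2 * (n + 1)) (n + 1) : ℝ) / ((n + 1) * 4 ^ (n + 1))) = aa := by
    funext n
    rw [aa, bb, Nat.centralBinom_eq_two_mul_choose, div_div]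
    ring
  rw [heq, ← tsum_aa]
  exact summable_aa.hasSum
end

section
/- For every integer k ≥ 1 and every real x with 0 ≤ x ≤ 1, ∑_{n=1}^∞ (C(2n,n)/(n^k·4^n))·x^{2n} equals the k-fold iterated integral 2^k·∫_{0<t_k<⋯<t_1<x} (t_k dt_k/(1-t_k²+√(1-t_k²)))·∏_{j=1}^{k-1} (dt_j/t_j); in particular for k=1, ∑_{n=1}^∞ (C(2n,n)/(n·4^n))·x^{2n} = 2·∫_0^x t·dt/(1-t²+√(1-t²)). -/
open MeasureTheory Finset Set

/-- `J k x` is the `(k+1)`-fold iterated integral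
`∫_{0<t_{k+1}<⋯<t_1<x} (t_{k+1} dt_{k+1}/(1-t_{k+1}²+√(1-t_{k+1}²)))·∏_{j=1}^{k} dt_j/t_j`,
built from the inside out. -/
noncomputable def J : ℕ → ℝ → ℝ
  | 0, x => ∫ t in (0:ℝ)..x, t / (1 - t ^ 2 + Real.sqrt (1 - t ^ 2))
  | k + 1, x => ∫ t in (0:ℝ)..x, J k t / t

namespace CBII

noncomputable def b (n : ℕ) : ℝ := (Nat.centralBinom n : ℝ) / 4 ^ n

lemma b_pos (n : ℕ) : 0 < b n :=
  div_pos (by exact_mod_cast Nat.centralBinom_pos n) (by positivity)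

lemma b_zero : b 0 = 1 := by simp [b, Nat.centralBinom]

lemma b_rec (n : ℕ) : 2 * ((n:ℝ) + 1) * b (n + 1) = (2 * n + 1) * b n := by
  have h := Nat.succ_mul_centralBinom_succ n
  have h' : ((n:ℝ) + 1) * (Nat.centralBinom (n+1) : ℝ)
      = 2 * (2 * (n:ℝ) + 1) * (Nat.centralBinom n : ℝ) := by exact_mod_cast congrArg (Nat.cast : ℕ → ℝ) h
  simp only [b]
  have h4 : (4:ℝ) ^ n ≠ 0 := by positivity
  field_simp [pow_succ]
  linear_combination (2 * (4:ℝ)^n) * h'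

lemma b_succ_le (n : ℕ) : b (n+1) ≤ b n := by
  have h := b_rec n
  have hp := b_pos n
  have hp1 := b_pos (n+1)
  nlinarith

lemma b_le_one (n : ℕ) : b n ≤ 1 := by
  induction n with
  | zero => simp [b_zero]
  | succ n ih => exact (b_succ_le n).trans ih

lemma b_sq (n : ℕ) : b n ^ 2 * (2*(n:ℝ)+1) ≤ 1 := by
  induction n with
  | zero => simp [b_zero]
  | succ n ih =>
    have h := b_rec n
    have hp := (b_pos n).le
    have hp1 := (b_pos (n+1)).le
    have h2 : (2*((n:ℝ)+1)*b (n+1))^2 = ((2*(n:ℝ)+1)*b n)^2 := by rw [h]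
    push_cast
    nlinarith [sq_nonneg (b n), sq_nonneg (b (n+1))]

lemma b_div_le (n : ℕ) : b (n+1) / ((n:ℝ)+1) ≤ ((n:ℝ)+1) ^ (-(3/2) : ℝ) := by
  have hx : (0:ℝ) < (n:ℝ)+1 := by positivity
  have h1 : b (n+1) ≤ ((n:ℝ)+1) ^ (-(1/2):ℝ) := by
    have hs := b_sq (n+1)
    have h2 : (((n:ℝ)+1) ^ (-(1/2):ℝ))^2 = ((n:ℝ)+1)^(-1:ℝ) := by
      rw [← Real.rpow_natCast (((n:ℝ)+1) ^ (-(1/2):ℝ)) 2, ← Real.rpow_mul hx.le]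
      norm_num
    have h3 : b (n+1)^2 ≤ ((n:ℝ)+1)^(-1:ℝ) := by
      have key : b (n+1)^2 * ((n:ℝ)+1) ≤ 1 := by
        push_cast at hs
        nlinarith [sq_nonneg (b (n+1))]
      rw [Real.rpow_neg_one]
      calc b (n+1)^2 = b (n+1)^2 * ((n:ℝ)+1) * ((n:ℝ)+1)⁻¹ := by field_simp
        _ ≤ 1 * ((n:ℝ)+1)⁻¹ := mul_le_mul_of_nonneg_right key (by positivity)
        _ = ((n:ℝ)+1)⁻¹ := one_mul _
    calc b (n+1) = Real.sqrt (b (n+1)^2) := (Real.sqrt_sq (b_pos _).le).symm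
      _ ≤ Real.sqrt ((((n:ℝ)+1) ^ (-(1/2):ℝ))^2) := Real.sqrt_le_sqrt (by rw [h2]; exact h3)
      _ = ((n:ℝ)+1) ^ (-(1/2):ℝ) := Real.sqrt_sq (by positivity)
  calc b (n+1) / ((n:ℝ)+1) ≤ ((n:ℝ)+1)^(-(1/2):ℝ) / ((n:ℝ)+1) := (div_le_div_iff_of_pos_right hx).mpr h1
    _ = ((n:ℝ)+1)^(-(3/2):ℝ) := by
        rw [div_eq_mul_inv, ← Real.rpow_neg_one ((n:ℝ)+1), ← Real.rpow_add hx]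
        norm_num

lemma summable_bd : Summable (fun n => b (n+1) / ((n:ℝ)+1)) := by
  refine Summable.of_nonneg_of_le (fun n => div_nonneg (b_pos _).le (by positivity)) b_div_le ?_
  have h : Summable (fun n : ℕ => ((n:ℝ)) ^ (-(3/2):ℝ)) :=
    Real.summable_nat_rpow.mpr (by norm_num)
  have := (summable_nat_add_iff 1).mpr h
  simpa using this

lemma summable_pow (k : ℕ) : Summable (fun n => b (n+1) / ((n:ℝ)+1)^(k+1)) := by
  refine Summable.of_nonneg_of_le (fun n => div_nonneg (b_pos _).le (by positivity)) (fun n => ?_) summable_bd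
  have h1 : ((n:ℝ)+1) ≤ ((n:ℝ)+1)^(k+1) := le_self_pow₀ (by have := Nat.cast_nonneg (α := ℝ) n; linarith) (Nat.succ_ne_zero k)
  exact div_le_div_of_nonneg_left (b_pos _).le (by positivity) h1


lemma refl_sum (m : ℕ) : ∑ i ∈ range (m+1), ((m - i : ℕ) : ℝ) * (b i * b (m - i))
    = ∑ i ∈ range (m+1), (i:ℝ) * (b i * b (m - i)) := by
  have h := Finset.sum_range_reflect (fun i => ((m - i : ℕ):ℝ) * (b i * b (m-i))) (m+1)
  simp only [Nat.add_sub_cancel] at h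
  rw [← h]
  refine Finset.sum_congr rfl fun j hj => ?_
  have hj' : j ≤ m := Nat.lt_succ_iff.mp (Finset.mem_range.mp hj)
  rw [Nat.sub_sub_self hj']
  ring

lemma weight (m : ℕ) : (m:ℝ) * (∑ i ∈ range (m+1), b i * b (m-i))
    = 2 * ∑ i ∈ range (m+1), (i:ℝ) * (b i * b (m - i)) := by
  rw [Finset.mul_sum, two_mul]
  nth_rewrite 2 [← refl_sum m]
  rw [← Finset.sum_add_distrib]
  refine Finset.sum_congr rfl fun j hj => ?_
  have hj' : j ≤ m := Nat.lt_succ_iff.mp (Finset.mem_range.mp hj)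
  have hc : ((m - j : ℕ):ℝ) = (m:ℝ) - (j:ℝ) := by
    rw [Nat.cast_sub hj']
  rw [hc]
  ring

lemma conv : ∀ n : ℕ, ∑ i ∈ range (n+1), b i * b (n - i) = 1 := by
  intro n
  induction n with
  | zero => simp [b_zero]
  | succ n ih =>
    have shift : ∑ i ∈ range (n+1+1), (i:ℝ) * (b i * b (n+1-i))
        = ∑ j ∈ range (n+1), ((j:ℝ)+1) * (b (j+1) * b (n-j)) := by
      rw [Finset.sum_range_succ' (fun i => (i:ℝ) * (b i * b (n+1-i))) (n+1)]
      simp only [Nat.cast_zero, zero_mul, add_zero, Nat.succ_sub_succ]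
      refine Finset.sum_congr rfl fun j hj => ?_
      push_cast
      ring
    have step2 : 2 * ∑ j ∈ range (n+1), ((j:ℝ)+1) * (b (j+1) * b (n-j))
        = ∑ j ∈ range (n+1), ((2*(j:ℝ)+1) * (b j * b (n-j))) := by
      rw [Finset.mul_sum]
      refine Finset.sum_congr rfl fun j hj => ?_
      calc 2*(((j:ℝ)+1) * (b (j+1) * b (n-j)))
          = (2*((j:ℝ)+1)*b (j+1)) * b (n-j) := by ring
        _ = ((2*(j:ℝ)+1) * b j) * b (n-j) := by rw [b_rec j]
        _ = (2*(j:ℝ)+1) * (b j * b (n-j)) := by ring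
    have expand : ∑ j ∈ range (n+1), ((2*(j:ℝ)+1) * (b j * b (n-j)))
        = 2 * (∑ j ∈ range (n+1), (j:ℝ) * (b j * b (n-j))) + ∑ j ∈ range (n+1), b j * b (n-j) := by
      rw [Finset.mul_sum, ← Finset.sum_add_distrib]
      exact Finset.sum_congr rfl fun j hj => by ring
    have hne : ((n:ℝ)+1) ≠ 0 := by positivity
    have key : ((n:ℝ)+1) * (∑ i ∈ range (n+1+1), b i * b (n+1-i)) = ((n:ℝ)+1) * 1 := by
      have w1 := weight (n+1)
      push_cast at w1
      rw [w1, shift, step2, expand, ← weight n, ih]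
      ring
    exact mul_left_cancel₀ hne key

lemma gf {u : ℝ} (h0 : 0 ≤ u) (h1 : u < 1) :
    HasSum (fun n => b n * u ^ n) (1 / Real.sqrt (1 - u)) := by
  have hnorm : Summable (fun n => ‖b n * u ^ n‖) := by
    refine Summable.of_nonneg_of_le (fun n => norm_nonneg _) (fun n => ?_)
      (summable_geometric_of_lt_one h0 h1)
    rw [Real.norm_of_nonneg (mul_nonneg (b_pos n).le (by positivity))]
    calc b n * u ^ n ≤ 1 * u ^ n := by
          exact mul_le_mul_of_nonneg_right (b_le_one n) (by positivity)
      _ = u ^ n := one_mul _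
  have hS : Summable (fun n => b n * u ^ n) := hnorm.of_norm
  have hsq : (∑' n, b n * u ^ n) * (∑' n, b n * u ^ n) = (1-u)⁻¹ := by
    rw [tsum_mul_tsum_eq_tsum_sum_range_of_summable_norm hnorm hnorm]
    have hterm : ∀ n : ℕ, ∑ k ∈ range (n+1), (b k * u^k) * (b (n-k) * u^(n-k)) = u ^ n := by
      intro n
      have : ∀ k ∈ range (n+1), (b k * u^k) * (b (n-k) * u^(n-k)) = (b k * b (n-k)) * u^n := by
        intro k hk
        have hk' : k ≤ n := Nat.lt_succ_iff.mp (Finset.mem_range.mp hk)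
        have : u ^ k * u ^ (n - k) = u ^ n := by
          rw [← pow_add, Nat.add_sub_cancel' hk']
        calc (b k * u^k) * (b (n-k) * u^(n-k)) = (b k * b (n-k)) * (u^k * u^(n-k)) := by ring
          _ = (b k * b (n-k)) * u^n := by rw [this]
      rw [Finset.sum_congr rfl this, ← Finset.sum_mul, conv n, one_mul]
    rw [tsum_congr hterm, tsum_geometric_of_lt_one h0 h1]
  have hpos : (0:ℝ) < ∑' n, b n * u ^ n := by
    have h00 : (1:ℝ) ≤ ∑' n, b n * u ^ n := by
      have := Summable.le_tsum hS 0 (fun i _ => mul_nonneg (b_pos i).le (by positivity))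
      simpa [b_zero] using this
    linarith
  have h1u : (0:ℝ) < 1 - u := by linarith
  have hval : (∑' n, b n * u ^ n) = 1 / Real.sqrt (1 - u) := by
    have h2 : Real.sqrt ((∑' n, b n * u ^ n)^2) = Real.sqrt ((1-u)⁻¹) := by
      rw [sq, hsq]
    rw [Real.sqrt_sq hpos.le, Real.sqrt_inv] at h2
    rw [h2, one_div]
  exact hval ▸ hS.hasSum


lemma gf_shift {x : ℝ} (h0 : 0 ≤ x) (h1 : x < 1) :
    HasSum (fun n => b (n+1) * x ^ (2*(n+1))) (1 / Real.sqrt (1 - x^2) - 1) := by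
  have hx2 : x^2 < 1 := by nlinarith
  have h := gf (u := x^2) (by positivity) hx2
  have h' := (hasSum_nat_add_iff' (f := fun n => b n * (x^2)^n) 1).mpr h
  simpa [b_zero, pow_mul] using h'

lemma gsum {t : ℝ} (h0 : 0 < t) (h1 : t < 1) :
    HasSum (fun n => 2 * b (n+1) * t ^ (2*n+1))
      (2 * (t / (1 - t^2 + Real.sqrt (1 - t^2)))) := by
  have h := (gf_shift h0.le h1).mul_left (2/t)
  have hfun : ∀ n : ℕ, 2/t * (b (n+1) * t^(2*(n+1))) = 2 * b (n+1) * t ^ (2*n+1) := by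
    intro n
    have ht : t^(2*(n+1)) = t^(2*n+1) * t := by
      rw [show 2*(n+1) = 2*n+1+1 from by omega, pow_succ]
    rw [ht]
    field_simp
  have hval : 2/t * (1/Real.sqrt (1-t^2) - 1) = 2 * (t / (1 - t^2 + Real.sqrt (1 - t^2))) := by
    have h2 : (0:ℝ) < 1 - t^2 := by nlinarith
    have hs : 0 < Real.sqrt (1 - t^2) := Real.sqrt_pos.mpr h2
    have hss : Real.sqrt (1-t^2) * Real.sqrt (1-t^2) = 1 - t^2 := Real.mul_self_sqrt h2.le
    have hden : 1 - t^2 + Real.sqrt (1-t^2) ≠ 0 := by nlinarith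
    field_simp
    nlinarith [hss]
  rw [hval] at h
  simp only [hfun] at h
  exact h

lemma swap {x : ℝ} (hx0 : 0 ≤ x) (hx1 : x ≤ 1) {c : ℕ → ℝ} (hc0 : ∀ n, 0 ≤ c n)
    (hcs : Summable (fun n => c n / ((n:ℝ)+1))) {G : ℝ → ℝ}
    (hG : ∀ t, t ∈ Set.Ioo (0:ℝ) 1 → G t = ∑' n, 2 * c n * t ^ (2*n+1)) :
    ∫ t in (0:ℝ)..x, G t = ∑' n, c n / ((n:ℝ)+1) * x ^ (2*(n+1)) := by
  have hIoc : ∫ t in (0:ℝ)..x, G t = ∫ t in Set.Ioc 0 x, G t :=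
    intervalIntegral.integral_of_le hx0
  set F : ℕ → ℝ → ℝ := fun n t => 2 * c n * t ^ (2*n+1) with hF
  have hInt : ∀ n, Integrable (F n) (volume.restrict (Set.Ioc 0 x)) := fun n =>
    Continuous.integrableOn_Ioc (by continuity)
  have hIval : ∀ n, ∫ t in Set.Ioc 0 x, F n t = c n / ((n:ℝ)+1) * x ^ (2*(n+1)) := by
    intro n
    rw [← intervalIntegral.integral_of_le hx0]
    simp only [hF]
    rw [intervalIntegral.integral_const_mul, integral_pow]
    have hne : ((2:ℝ)*n+1+1) ≠ 0 := by positivity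
    push_cast
    rw [zero_pow (by omega)]
    field_simp
    ring
  have hIvalnorm : ∀ n, ∫ t in Set.Ioc 0 x, ‖F n t‖ = c n / ((n:ℝ)+1) * x ^ (2*(n+1)) := by
    intro n
    rw [← hIval n]
    refine integral_congr_ae ?_
    filter_upwards [ae_restrict_mem measurableSet_Ioc] with t ht
    exact Real.norm_of_nonneg
      (mul_nonneg (mul_nonneg (by norm_num) (hc0 n)) (pow_nonneg ht.1.le _))
  have hsumnorm : Summable (fun n => ∫ t in Set.Ioc 0 x, ‖F n t‖) := by
    refine Summable.of_nonneg_of_le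
      (fun n => integral_nonneg fun t => norm_nonneg _) (fun n => ?_) hcs
    rw [hIvalnorm n]
    calc c n / ((n:ℝ)+1) * x^(2*(n+1)) ≤ c n / ((n:ℝ)+1) * 1 :=
          mul_le_mul_of_nonneg_left (pow_le_one₀ hx0 hx1)
            (div_nonneg (hc0 n) (by positivity))
      _ = c n / ((n:ℝ)+1) := mul_one _
  have key := MeasureTheory.integral_tsum_of_summable_integral_norm hInt hsumnorm
  have hne : ∀ᵐ t ∂(volume.restrict (Set.Ioc 0 x)), t ≠ (1:ℝ) := by
    refine ae_restrict_of_ae ?_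
    have hset : {t : ℝ | ¬ t ≠ 1} = {1} := by ext t; simp
    rw [ae_iff, hset]
    exact measure_singleton 1
  have hae : G =ᵐ[volume.restrict (Set.Ioc 0 x)] (fun t => ∑' n, F n t) := by
    filter_upwards [ae_restrict_mem measurableSet_Ioc, hne] with t ht hne1
    have ht1 : t < 1 := lt_of_le_of_ne (ht.2.trans hx1) hne1
    exact hG t ⟨ht.1, ht1⟩
  rw [hIoc, integral_congr_ae hae, ← key]
  exact tsum_congr hIval

lemma main (k : ℕ) : ∀ x : ℝ, x ∈ Set.Icc (0:ℝ) 1 →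
    HasSum (fun n => b (n+1) / ((n:ℝ)+1)^(k+1) * x^(2*(n+1))) (2^(k+1) * J k x) := by
  induction k with
  | zero =>
    intro x hx
    have hsum : Summable (fun n => b (n+1) / ((n:ℝ)+1)^(0+1) * x^(2*(n+1))) := by
      refine Summable.of_nonneg_of_le
        (fun n => mul_nonneg (div_nonneg (b_pos _).le (by positivity)) (pow_nonneg hx.1 _))
        (fun n => ?_) (summable_pow 0)
      calc b (n+1) / ((n:ℝ)+1)^(0+1) * x^(2*(n+1))
          ≤ b (n+1) / ((n:ℝ)+1)^(0+1) * 1 :=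
            mul_le_mul_of_nonneg_left (pow_le_one₀ hx.1 hx.2)
              (div_nonneg (b_pos _).le (by positivity))
        _ = b (n+1) / ((n:ℝ)+1)^(0+1) := mul_one _
    rw [hsum.hasSum_iff]
    have hswap := swap hx.1 hx.2 (c := fun n => b (n+1)) (fun n => (b_pos _).le) summable_bd
      (G := fun t => 2 * (t/(1-t^2+Real.sqrt (1-t^2))))
      (fun t ht => ((gsum ht.1 ht.2).tsum_eq).symm)
    have hJ : (2:ℝ)^(0+1) * J 0 x = ∫ t in (0:ℝ)..x, 2 * (t/(1-t^2+Real.sqrt (1-t^2))) := by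
      rw [pow_one]
      show (2:ℝ) * (∫ t in (0:ℝ)..x, t / (1 - t ^ 2 + Real.sqrt (1 - t ^ 2))) = _
      rw [← intervalIntegral.integral_const_mul]
    rw [hJ, hswap]
    exact tsum_congr fun n => by norm_num
  | succ k ih =>
    intro x hx
    set c : ℕ → ℝ := fun n => b (n+1) / ((n:ℝ)+1)^(k+1) with hc
    have hc0 : ∀ n, 0 ≤ c n := fun n => div_nonneg (b_pos _).le (by positivity)
    have hcs : Summable (fun n => c n / ((n:ℝ)+1)) := by
      refine (summable_pow (k+1)).congr fun n => ?_
      simp only [hc]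
      rw [div_div, ← pow_succ]
    have hsum : Summable (fun n => b (n+1) / ((n:ℝ)+1)^(k+1+1) * x^(2*(n+1))) := by
      refine Summable.of_nonneg_of_le
        (fun n => mul_nonneg (div_nonneg (b_pos _).le (by positivity)) (pow_nonneg hx.1 _))
        (fun n => ?_) (summable_pow (k+1))
      calc b (n+1) / ((n:ℝ)+1)^(k+1+1) * x^(2*(n+1))
          ≤ b (n+1) / ((n:ℝ)+1)^(k+1+1) * 1 :=
            mul_le_mul_of_nonneg_left (pow_le_one₀ hx.1 hx.2)
              (div_nonneg (b_pos _).le (by positivity))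
        _ = b (n+1) / ((n:ℝ)+1)^(k+1+1) := mul_one _
    rw [hsum.hasSum_iff]
    have hG : ∀ t, t ∈ Set.Ioo (0:ℝ) 1 →
        (2:ℝ)^(k+1+1) * (J k t / t) = ∑' n, 2 * c n * t ^ (2*n+1) := by
      intro t ht
      have h := (ih t ⟨ht.1.le, ht.2.le⟩).mul_left (2/t)
      have ht0 : t ≠ 0 := ht.1.ne'
      have hfun : ∀ n : ℕ, 2/t * (b (n+1) / ((n:ℝ)+1)^(k+1) * t^(2*(n+1)))
          = 2 * c n * t ^ (2*n+1) := by
        intro n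
        have htp : t^(2*(n+1)) = t^(2*n+1) * t := by
          rw [show 2*(n+1) = 2*n+1+1 from by omega, pow_succ]
        rw [htp]
        simp only [hc]
        field_simp
      have hval : 2/t * (2^(k+1) * J k t) = (2:ℝ)^(k+1+1) * (J k t / t) := by
        field_simp
        ring
      rw [hval] at h
      simp only [hfun] at h
      exact h.tsum_eq.symm
    have hswap := swap hx.1 hx.2 hc0 hcs hG
    have hJ : (2:ℝ)^(k+1+1) * J (k+1) x
        = ∫ t in (0:ℝ)..x, (2:ℝ)^(k+1+1) * (J k t / t) := by
      show (2:ℝ)^(k+1+1) * (∫ t in (0:ℝ)..x, J k t / t) = _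
      rw [← intervalIntegral.integral_const_mul]
    rw [hJ, hswap]
    refine tsum_congr fun n => ?_
    simp only [hc]
    rw [div_div, ← pow_succ]


end CBII

theorem central_binom_iterated_integral (k : ℕ) (hk : 1 ≤ k) (x : ℝ)
    (hx : x ∈ Set.Icc (0:ℝ) 1) :
    HasSum (fun n : ℕ =>
      ((Nat.choose (2 * (n + 1)) (n + 1) : ℝ) / (((n : ℝ) + 1) ^ k * 4 ^ (n + 1))) *
        x ^ (2 * (n + 1)))
      (2 ^ k * J (k - 1) x)
    ∧ HasSum (fun n : ℕ =>
      ((Nat.choose (2 * (n + 1)) (n + 1) : ℝ) / (((n : ℝ) + 1) * 4 ^ (n + 1))) *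
        x ^ (2 * (n + 1)))
      (2 * ∫ t in (0:ℝ)..x, t / (1 - t ^ 2 + Real.sqrt (1 - t ^ 2))) := by
  have heq : ∀ (m : ℕ) (n : ℕ),
      ((Nat.choose (2 * (n + 1)) (n + 1) : ℝ) / (((n : ℝ) + 1) ^ m * 4 ^ (n + 1))) * x ^ (2 * (n + 1))
      = CBII.b (n+1) / ((n:ℝ)+1)^m * x^(2*(n+1)) := by
    intro m n
    simp only [CBII.b, Nat.centralBinom]
    rw [div_div, mul_comm ((4:ℝ)^(n+1))]
  constructor
  · obtain ⟨k', rfl⟩ : ∃ k', k = k' + 1 := ⟨k - 1, by omega⟩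
    have h := CBII.main k' x hx
    have hfun : (fun n : ℕ =>
        ((Nat.choose (2 * (n + 1)) (n + 1) : ℝ) / (((n : ℝ) + 1) ^ (k'+1) * 4 ^ (n + 1))) *
          x ^ (2 * (n + 1)))
        = fun n => CBII.b (n+1) / ((n:ℝ)+1)^(k'+1) * x^(2*(n+1)) := funext fun n => heq (k'+1) n
    rw [hfun, Nat.add_sub_cancel]
    exact h
  · have h := CBII.main 0 x hx
    have hfun : (fun n : ℕ =>
        ((Nat.choose (2 * (n + 1)) (n + 1) : ℝ) / (((n : ℝ) + 1) * 4 ^ (n + 1))) *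
          x ^ (2 * (n + 1)))
        = fun n => CBII.b (n+1) / ((n:ℝ)+1)^(0+1) * x^(2*(n+1)) := by
      funext n
      rw [← heq 1 n]
      norm_num
    have hval : (2:ℝ)^(0+1) * J 0 x
        = 2 * ∫ t in (0:ℝ)..x, t / (1 - t ^ 2 + Real.sqrt (1 - t ^ 2)) := by
      norm_num [J]
    rw [hfun]
    rw [← hval]
    exact h
end
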